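/- Let Δ be a PR complex over a field K. Then for every face σ of Δ, there is at most one integer i with H̃_i(link_Δ σ; K) ≠ 0. -/

import Mathlib

open Finset

namespace SRPure

variable {V : Type*}

/-- A downward closed set of finite sets: the faces of an abstract simplicial complex. -/
def IsDown (Δ : Set (Finset V)) : Prop := ∀ s ∈ Δ, ∀ t ⊆ s, t ∈ Δ

/-- A facet is a maximal face. -/
def IsFacet (Δ : Set (Finset V)) (F : Finset V) : Prop :=
  F ∈ Δ ∧ ∀ G ∈ Δ, F ⊆ G → F = G

section Link

variable [DecidableEq V]

/-- The link of a face `σ`. -/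
def link (Δ : Set (Finset V)) (σ : Finset V) : Set (Finset V) :=
  {τ | Disjoint τ σ ∧ τ ∪ σ ∈ Δ}

theorem link_down {Δ : Set (Finset V)} (hΔ : IsDown Δ) (σ : Finset V) :
    IsDown (link Δ σ) := by
  rintro s ⟨hd, hu⟩ t hts
  exact ⟨hd.mono_left hts, hΔ _ hu _ (Finset.union_subset_union hts (Finset.Subset.refl σ))⟩

end Link

section Homology

variable (K : Type*) [Field K] [LinearOrder V]

/-- Simplicial chains spanned by the faces of cardinality `c`. -/
abbrev Chains (Δ : Set (Finset V)) (c : ℕ) : Type _ :=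
  {s : Finset V // s ∈ Δ ∧ s.card = c} →₀ K

/-- The boundary of a single face of cardinality `c+1`. -/
noncomputable def faceBdry {Δ : Set (Finset V)} (hΔ : IsDown Δ) (c : ℕ)
    (s : {s : Finset V // s ∈ Δ ∧ s.card = c + 1}) : Chains K Δ c :=
  ∑ v ∈ s.1.attach,
    ((-1 : K) ^ ((s.1.filter (fun w => w < v.1)).card)) •
      Finsupp.single
        ⟨s.1.erase v.1, hΔ _ s.2.1 _ (Finset.erase_subset _ _),
          by simp [Finset.card_erase_of_mem v.2, s.2.2]⟩ (1 : K)

/-- The simplicial boundary map. -/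
noncomputable def bdry {Δ : Set (Finset V)} (hΔ : IsDown Δ) (c : ℕ) :
    Chains K Δ (c + 1) →ₗ[K] Chains K Δ c :=
  Finsupp.lsum K fun s => LinearMap.toSpanSingleton K _ (faceBdry K hΔ c s)

/-- Reduced cycles in cardinality `c` (homological degree `c - 1`). -/
noncomputable def cycles {Δ : Set (Finset V)} (hΔ : IsDown Δ) :
    (c : ℕ) → Submodule K (Chains K Δ c)
  | 0 => ⊤
  | c + 1 => LinearMap.ker (bdry K hΔ c)

/-- `RH K hΔ c` is the reduced simplicial homology (with coefficients in `K`) of the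
complex in homological degree `c - 1`, indexed by the cardinality `c` of faces; so
`RH K hΔ 0` is `H̃₋₁` and `RH K hΔ (i+1)` is `H̃ᵢ`. -/
noncomputable abbrev RH {Δ : Set (Finset V)} (hΔ : IsDown Δ) (c : ℕ) :=
  @HasQuotient.Quotient (cycles K hΔ c) (Submodule K (cycles K hΔ c))
    (Submodule.hasQuotient (R := K) (M := cycles K hΔ c))
    (Submodule.comap (cycles K hΔ c).subtype (LinearMap.range (bdry K hΔ c)))

/-- A complex is PR (has a "pure resolution") over `K` if links of faces of different
sizes never have nontrivial reduced homology in the same degree. -/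
def IsPR {Δ : Set (Finset V)} (hΔ : IsDown Δ) : Prop :=
  ∀ σ ∈ Δ, ∀ τ ∈ Δ, ∀ c : ℕ,
    Nontrivial (RH K (link_down hΔ σ) c) →
    Nontrivial (RH K (link_down hΔ τ) c) → σ.card = τ.card

end Homology

end SRPure


----------------------------------------------------------------
-- auxiliary development
----------------------------------------------------------------

namespace SRPure

noncomputable section Aux
open Classical
set_option linter.unusedSectionVars false

variable {V : Type*} [LinearOrder V] (K : Type*) [Field K]

/-- sign of a vertex relative to a finset -/
def sg (v : V) (s : Finset V) : K := (-1 : K) ^ ((s.filter (fun w => w < v)).card)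

lemma sg_mul_self (v : V) (s : Finset V) : sg K v s * sg K v s = 1 := by
  rw [sg, ← pow_add]
  exact Even.neg_one_pow ⟨_, rfl⟩

lemma sg_erase (v : V) (s : Finset V) : sg K v (s.erase v) = sg K v s := by
  unfold sg
  rw [Finset.filter_erase]
  congr 1
  rw [Finset.erase_eq_of_notMem]
  simp

/-- the basic chain attached to a finset, or 0 if it is not a face of the right size -/
def chainOf (Δ : Set (Finset V)) (c : ℕ) (s : Finset V) : Chains K Δ c :=
  if h : s ∈ Δ ∧ s.card = c then Finsupp.single ⟨s, h⟩ 1 else 0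

lemma chainOf_pos {Δ : Set (Finset V)} {c : ℕ} {s : Finset V} (h : s ∈ Δ ∧ s.card = c) :
    chainOf K Δ c s = Finsupp.single ⟨s, h⟩ 1 := dif_pos h

lemma chainOf_card_ne {Δ : Set (Finset V)} {c : ℕ} {s : Finset V} (h : s.card ≠ c) :
    chainOf K Δ c s = 0 := dif_neg (fun hh => h hh.2)

lemma single_eq_chainOf {Δ : Set (Finset V)} {c : ℕ}
    (s : {s : Finset V // s ∈ Δ ∧ s.card = c}) :
    Finsupp.single s (1 : K) = chainOf K Δ c s.1 := by
  rw [chainOf_pos K s.2]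

lemma bdry_single {Δ : Set (Finset V)} (hΔ : IsDown Δ) (c : ℕ)
    (s : {s : Finset V // s ∈ Δ ∧ s.card = c + 1}) :
    bdry K hΔ c (Finsupp.single s 1) = faceBdry K hΔ c s := by
  rw [bdry, Finsupp.lsum_single, LinearMap.toSpanSingleton_apply, one_smul]

lemma faceBdry_eq {Δ : Set (Finset V)} (hΔ : IsDown Δ) (c : ℕ)
    (s : {s : Finset V // s ∈ Δ ∧ s.card = c + 1}) :
    faceBdry K hΔ c s = ∑ v ∈ s.1, sg K v s.1 • chainOf K Δ c (s.1.erase v) := by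
  rw [faceBdry, ← Finset.sum_attach s.1 (fun v => sg K v s.1 • chainOf K Δ c (s.1.erase v))]
  refine Finset.sum_congr rfl fun v _ => ?_
  rw [single_eq_chainOf]
  rfl

lemma bdry_chainOf {Δ : Set (Finset V)} (hΔ : IsDown Δ) (c : ℕ) {s : Finset V}
    (hs : s ∈ Δ) (hc : s.card = c + 1) :
    bdry K hΔ c (chainOf K Δ (c+1) s) =
      ∑ v ∈ s, sg K v s • chainOf K Δ c (s.erase v) := by
  rw [chainOf_pos K ⟨hs, hc⟩, bdry_single, faceBdry_eq]


----------------------------------------------------------------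
-- deletion, and chain maps
----------------------------------------------------------------

/-- deletion of a vertex -/
def del (Δ : Set (Finset V)) (v : V) : Set (Finset V) := {s ∈ Δ | v ∉ s}

lemma del_down {Δ : Set (Finset V)} (hΔ : IsDown Δ) (v : V) : IsDown (del Δ v) := by
  rintro s ⟨hs, hv⟩ t hts
  exact ⟨hΔ _ hs _ hts, fun hvt => hv (hts hvt)⟩

lemma del_subset (Δ : Set (Finset V)) (v : V) : del Δ v ⊆ Δ := fun s hs => hs.1

lemma link_subset_del {Δ : Set (Finset V)} (hΔ : IsDown Δ) (v : V) :
    link Δ {v} ⊆ del Δ v := by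
  rintro s ⟨hd, hu⟩
  refine ⟨hΔ _ hu _ Finset.subset_union_left, ?_⟩
  simpa [Finset.disjoint_singleton_right] using hd

lemma mem_link_singleton {Δ : Set (Finset V)} {v : V} {s : Finset V} :
    s ∈ link Δ {v} ↔ v ∉ s ∧ insert v s ∈ Δ := by
  constructor
  · rintro ⟨hd, hu⟩
    rw [Finset.disjoint_singleton_right] at hd
    refine ⟨hd, ?_⟩
    rwa [Finset.union_comm, ← Finset.insert_eq] at hu
  · rintro ⟨hv, hi⟩
    refine ⟨by simpa [Finset.disjoint_singleton_right] using hv, ?_⟩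
    rwa [Finset.union_comm, ← Finset.insert_eq]

/-- inclusion of chains of a subcomplex -/
def inclMap {Δ₁ Δ₂ : Set (Finset V)} (h : Δ₁ ⊆ Δ₂) (n : ℕ) :
    Chains K Δ₁ n →ₗ[K] Chains K Δ₂ n :=
  Finsupp.lsum K fun s => LinearMap.toSpanSingleton K _
    (Finsupp.single ⟨s.1, h s.2.1, s.2.2⟩ 1)

lemma inclMap_single {Δ₁ Δ₂ : Set (Finset V)} (h : Δ₁ ⊆ Δ₂) (n : ℕ)
    (s : {s : Finset V // s ∈ Δ₁ ∧ s.card = n}) :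
    inclMap K h n (Finsupp.single s 1) = Finsupp.single ⟨s.1, h s.2.1, s.2.2⟩ 1 := by
  rw [inclMap, Finsupp.lsum_single, LinearMap.toSpanSingleton_apply, one_smul]

lemma inclMap_chainOf {Δ₁ Δ₂ : Set (Finset V)} (h : Δ₁ ⊆ Δ₂) (n : ℕ)
    {s : Finset V} (hs : s ∈ Δ₁) :
    inclMap K h n (chainOf K Δ₁ n s) = chainOf K Δ₂ n s := by
  by_cases hc : s.card = n
  · rw [chainOf_pos K ⟨hs, hc⟩, inclMap_single, chainOf_pos K ⟨h hs, hc⟩]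
  · rw [chainOf_card_ne K hc, chainOf_card_ne K hc, map_zero]

/-- the cone map over the vertex `v` -/
def coneMap (Δ : Set (Finset V)) (v : V) (n : ℕ) :
    Chains K (link Δ {v}) n →ₗ[K] Chains K Δ (n + 1) :=
  Finsupp.lsum K fun u => LinearMap.toSpanSingleton K _
    (sg K v u.1 • Finsupp.single
      ⟨insert v u.1, (mem_link_singleton.mp u.2.1).2,
        by rw [Finset.card_insert_of_notMem (mem_link_singleton.mp u.2.1).1, u.2.2]⟩ 1)

lemma coneMap_chainOf (Δ : Set (Finset V)) (v : V) (n : ℕ) {u : Finset V}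
    (hu : u ∈ link Δ {v}) :
    coneMap K Δ v n (chainOf K (link Δ {v}) n u) =
      sg K v u • chainOf K Δ (n+1) (insert v u) := by
  have hv : v ∉ u := (mem_link_singleton.mp hu).1
  by_cases hc : u.card = n
  · rw [chainOf_pos K ⟨hu, hc⟩, coneMap, Finsupp.lsum_single,
      LinearMap.toSpanSingleton_apply, one_smul,
      chainOf_pos K ⟨(mem_link_singleton.mp hu).2, by rw [Finset.card_insert_of_notMem hv, hc]⟩]
  · rw [chainOf_card_ne K hc, chainOf_card_ne K (by rw [Finset.card_insert_of_notMem hv]; omega),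
      map_zero, smul_zero]

/-- contraction with the vertex `v` -/
def iotaMap (Δ : Set (Finset V)) (v : V) (n : ℕ) :
    Chains K Δ (n + 1) →ₗ[K] Chains K (link Δ {v}) n :=
  Finsupp.lsum K fun s => LinearMap.toSpanSingleton K _
    (if h : v ∈ s.1 then
      sg K v s.1 • Finsupp.single
        ⟨s.1.erase v, mem_link_singleton.mpr ⟨Finset.notMem_erase _ _,
            by rw [Finset.insert_erase h]; exact s.2.1⟩,
          by rw [Finset.card_erase_of_mem h, s.2.2]; rfl⟩ 1
     else (0 : Chains K (link Δ {v}) n))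

lemma iotaMap_chainOf_mem (Δ : Set (Finset V)) (v : V) (n : ℕ) {s : Finset V}
    (hs : s ∈ Δ) (hv : v ∈ s) :
    iotaMap K Δ v n (chainOf K Δ (n+1) s) =
      sg K v s • chainOf K (link Δ {v}) n (s.erase v) := by
  by_cases hc : s.card = n + 1
  · rw [chainOf_pos K ⟨hs, hc⟩, iotaMap, Finsupp.lsum_single,
      LinearMap.toSpanSingleton_apply, one_smul, dif_pos hv,
      chainOf_pos K ⟨mem_link_singleton.mpr ⟨Finset.notMem_erase _ _,
        by rwa [Finset.insert_erase hv]⟩, by rw [Finset.card_erase_of_mem hv, hc]; rfl⟩]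
  · rw [chainOf_card_ne K hc, chainOf_card_ne K
      (show (s.erase v).card ≠ n by
        rw [Finset.card_erase_of_mem hv]
        have : 0 < s.card := Finset.card_pos.mpr ⟨v, hv⟩
        omega),
      map_zero, smul_zero]

lemma iotaMap_chainOf_not_mem (Δ : Set (Finset V)) (v : V) (n : ℕ) {s : Finset V}
    (hs : s ∈ Δ) (hc : s.card = n + 1) (hv : v ∉ s) :
    iotaMap K Δ v n (chainOf K Δ (n+1) s) = 0 := by
  rw [chainOf_pos K ⟨hs, hc⟩, iotaMap, Finsupp.lsum_single,
    LinearMap.toSpanSingleton_apply, one_smul, dif_neg hv]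

/-- projection to the deletion -/
def projMap (Δ : Set (Finset V)) (v : V) (n : ℕ) :
    Chains K Δ n →ₗ[K] Chains K (del Δ v) n :=
  Finsupp.lsum K fun s => LinearMap.toSpanSingleton K _
    (if h : v ∈ s.1 then (0 : Chains K (del Δ v) n)
     else Finsupp.single ⟨s.1, ⟨s.2.1, h⟩, s.2.2⟩ 1)

lemma projMap_chainOf_mem (Δ : Set (Finset V)) (v : V) (n : ℕ) {s : Finset V}
    (hs : s ∈ Δ) (hc : s.card = n) (hv : v ∈ s) :
    projMap K Δ v n (chainOf K Δ n s) = 0 := by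
  rw [chainOf_pos K ⟨hs, hc⟩, projMap, Finsupp.lsum_single,
    LinearMap.toSpanSingleton_apply, one_smul, dif_pos hv]

lemma projMap_chainOf_not_mem (Δ : Set (Finset V)) (v : V) (n : ℕ) {s : Finset V}
    (hs : s ∈ Δ) (hv : v ∉ s) :
    projMap K Δ v n (chainOf K Δ n s) = chainOf K (del Δ v) n s := by
  by_cases hc : s.card = n
  · rw [chainOf_pos K ⟨hs, hc⟩, projMap, Finsupp.lsum_single,
      LinearMap.toSpanSingleton_apply, one_smul, dif_neg hv, chainOf_pos K ⟨(show s ∈ del Δ v from ⟨hs, hv⟩), hc⟩]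
  · rw [chainOf_card_ne K hc, chainOf_card_ne K hc, map_zero]


----------------------------------------------------------------
-- sign lemmas
----------------------------------------------------------------

lemma sg_insert_self {v : V} {u : Finset V} (hv : v ∉ u) :
    sg K v (insert v u) = sg K v u := by
  unfold sg
  rw [Finset.filter_insert, if_neg (lt_irrefl v)]

lemma sgn_key {v w : V} {u : Finset V} (hv : v ∉ u) (hw : w ∈ u) :
    sg K v u * sg K w (insert v u) = -(sg K w u * sg K v (u.erase w)) := by
  have hvw : v ≠ w := fun h => hv (h ▸ hw)
  unfold sg
  rw [Finset.filter_insert, Finset.filter_erase]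
  rcases lt_or_gt_of_ne hvw with h | h
  · rw [if_pos h, Finset.card_insert_of_notMem (fun hc => hv (Finset.filter_subset _ _ hc))]
    rw [Finset.erase_eq_of_notMem (s := u.filter (fun x => x < v)) (a := w)
      (fun hc => absurd (Finset.mem_filter.mp hc).2 (not_lt.mpr h.le))]
    rw [pow_succ]
    ring
  · rw [if_neg (not_lt.mpr h.le)]
    have hwmem : w ∈ u.filter (fun x => x < v) := Finset.mem_filter.mpr ⟨hw, h⟩
    rw [Finset.card_erase_of_mem hwmem]
    have hpos : 0 < (u.filter (fun x => x < v)).card := Finset.card_pos.mpr ⟨w, hwmem⟩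
    obtain ⟨k, hk⟩ : ∃ k, (u.filter (fun x => x < v)).card = k + 1 := ⟨(u.filter (fun x => x < v)).card - 1, by omega⟩
    rw [hk, Nat.add_sub_cancel, pow_succ]
    ring

----------------------------------------------------------------
-- extensionality helper
----------------------------------------------------------------

lemma map_eq_of_chainOf {Δ : Set (Finset V)} {n : ℕ} {M : Type*} [AddCommGroup M] [Module K M]
    (f g : Chains K Δ n →ₗ[K] M)
    (h : ∀ s : Finset V, s ∈ Δ → s.card = n → f (chainOf K Δ n s) = g (chainOf K Δ n s)) :
    ∀ z, f z = g z := by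
  intro z
  induction z using Finsupp.induction_linear with
  | zero => simp
  | add a b ha hb => simp [ha, hb]
  | single s a =>
    have : (Finsupp.single s a : Chains K Δ n) = a • chainOf K Δ n s.1 := by
      rw [← single_eq_chainOf, Finsupp.smul_single, smul_eq_mul, mul_one]
    rw [this, map_smul, map_smul, h s.1 s.2.1 s.2.2]

----------------------------------------------------------------
-- chain-level identities
----------------------------------------------------------------

section Identities

variable {Δ : Set (Finset V)} (hΔ : IsDown Δ) (v : V)

lemma link_subset (hΔ : IsDown Δ) (v : V) : link Δ {v} ⊆ Δ :=
  fun u hu => hΔ _ (mem_link_singleton.mp hu).2 _ (Finset.subset_insert _ _)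

/-- I1 -/
lemma iota_cone (n : ℕ) (z : Chains K (link Δ {v}) n) :
    iotaMap K Δ v n (coneMap K Δ v n z) = z := by
  refine map_eq_of_chainOf K ((iotaMap K Δ v n).comp (coneMap K Δ v n)) LinearMap.id
    (fun u hu hc => ?_) z
  have hv : v ∉ u := (mem_link_singleton.mp hu).1
  simp only [LinearMap.comp_apply, LinearMap.id_apply]
  rw [coneMap_chainOf K Δ v n hu, map_smul,
    iotaMap_chainOf_mem K Δ v n (mem_link_singleton.mp hu).2 (Finset.mem_insert_self v u),
    Finset.erase_insert hv, smul_smul, sg_insert_self K hv, sg_mul_self, one_smul]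

/-- I2 -/
lemma cone_iota_add_proj (n : ℕ) (z : Chains K Δ (n+1)) :
    coneMap K Δ v n (iotaMap K Δ v n z)
      + inclMap K (del_subset Δ v) (n+1) (projMap K Δ v (n+1) z) = z := by
  refine map_eq_of_chainOf K
    ((coneMap K Δ v n).comp (iotaMap K Δ v n)
      + (inclMap K (del_subset Δ v) (n+1)).comp (projMap K Δ v (n+1))) LinearMap.id
    (fun s hs hc => ?_) z
  simp only [LinearMap.add_apply, LinearMap.comp_apply, LinearMap.id_apply]
  by_cases hv : v ∈ s
  · rw [projMap_chainOf_mem K Δ v (n+1) hs hc hv, map_zero, add_zero,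
      iotaMap_chainOf_mem K Δ v n hs hv, map_smul,
      coneMap_chainOf K Δ v n (mem_link_singleton.mpr ⟨Finset.notMem_erase _ _,
        by rwa [Finset.insert_erase hv]⟩),
      Finset.insert_erase hv, smul_smul, sg_erase, sg_mul_self, one_smul]
  · rw [iotaMap_chainOf_not_mem K Δ v n hs hc hv, map_zero, zero_add,
      projMap_chainOf_not_mem K Δ v (n+1) hs hv,
      inclMap_chainOf K (del_subset Δ v) (n+1) (show s ∈ del Δ v from ⟨hs, hv⟩)]

/-- I3 -/
lemma iota_incl {Δ' : Set (Finset V)} (h : Δ' ⊆ Δ) (hfree : ∀ s ∈ Δ', v ∉ s) (n : ℕ)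
    (z : Chains K Δ' (n+1)) :
    iotaMap K Δ v n (inclMap K h (n+1) z) = 0 := by
  refine map_eq_of_chainOf K ((iotaMap K Δ v n).comp (inclMap K h (n+1))) 0
    (fun s hs hc => ?_) z
  simp only [LinearMap.comp_apply, LinearMap.zero_apply]
  rw [inclMap_chainOf K h (n+1) hs, iotaMap_chainOf_not_mem K Δ v n (h hs) hc (hfree s hs)]

/-- I7 -/
lemma proj_incl (n : ℕ) (z : Chains K (del Δ v) n) :
    projMap K Δ v n (inclMap K (del_subset Δ v) n z) = z := by
  refine map_eq_of_chainOf K ((projMap K Δ v n).comp (inclMap K (del_subset Δ v) n))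
    LinearMap.id (fun s hs hc => ?_) z
  simp only [LinearMap.comp_apply, LinearMap.id_apply]
  rw [inclMap_chainOf K (del_subset Δ v) n hs,
    projMap_chainOf_not_mem K Δ v n hs.1 hs.2]

/-- composition of inclusions -/
lemma incl_incl {Δ₁ Δ₂ Δ₃ : Set (Finset V)} (h₁ : Δ₁ ⊆ Δ₂) (h₂ : Δ₂ ⊆ Δ₃) (n : ℕ)
    (z : Chains K Δ₁ n) :
    inclMap K h₂ n (inclMap K h₁ n z) = inclMap K (h₁.trans h₂) n z := by
  refine map_eq_of_chainOf K ((inclMap K h₂ n).comp (inclMap K h₁ n))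
    (inclMap K (h₁.trans h₂) n) (fun s hs hc => ?_) z
  simp only [LinearMap.comp_apply]
  rw [inclMap_chainOf K h₁ n hs, inclMap_chainOf K h₂ n (h₁ hs), inclMap_chainOf K _ n hs]

/-- I5: inclusion commutes with the boundary -/
lemma incl_bdry {Δ₁ Δ₂ : Set (Finset V)} (hd₁ : IsDown Δ₁) (hd₂ : IsDown Δ₂)
    (h : Δ₁ ⊆ Δ₂) (n : ℕ) (z : Chains K Δ₁ (n+1)) :
    inclMap K h n (bdry K hd₁ n z) = bdry K hd₂ n (inclMap K h (n+1) z) := by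
  refine map_eq_of_chainOf K ((inclMap K h n).comp (bdry K hd₁ n))
    ((bdry K hd₂ n).comp (inclMap K h (n+1))) (fun s hs hc => ?_) z
  simp only [LinearMap.comp_apply]
  rw [bdry_chainOf K hd₁ n hs hc, inclMap_chainOf K h (n+1) hs, bdry_chainOf K hd₂ n (h hs) hc,
    map_sum]
  refine Finset.sum_congr rfl fun w hw => ?_
  rw [map_smul, inclMap_chainOf K h n (hd₁ _ hs _ (Finset.erase_subset _ _))]

/-- I4a: cone identity, bottom degree -/
lemma bdry_cone_zero (z : Chains K (link Δ {v}) 0) :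
    bdry K hΔ 0 (coneMap K Δ v 0 z) = inclMap K (link_subset hΔ v) 0 z := by
  refine map_eq_of_chainOf K ((bdry K hΔ 0).comp (coneMap K Δ v 0))
    (inclMap K (link_subset hΔ v) 0) (fun u hu hc => ?_) z
  have hv : v ∉ u := (mem_link_singleton.mp hu).1
  rw [Finset.card_eq_zero] at hc
  subst hc
  simp only [LinearMap.comp_apply]
  rw [coneMap_chainOf K Δ v 0 hu, map_smul,
    bdry_chainOf K hΔ 0 (mem_link_singleton.mp hu).2 (by simp),
    inclMap_chainOf K (link_subset hΔ v) 0 hu]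
  rw [show insert v (∅ : Finset V) = {v} from rfl]
  rw [Finset.sum_singleton, Finset.erase_singleton]
  rw [show sg K v ({v} : Finset V) = 1 from by simp [sg, Finset.filter_singleton],
    show sg K v (∅ : Finset V) = 1 from by simp [sg], one_smul, one_smul]

/-- I4b: cone identity -/
lemma bdry_cone_succ (m : ℕ) (z : Chains K (link Δ {v}) (m+1)) :
    bdry K hΔ (m+1) (coneMap K Δ v (m+1) z)
      = inclMap K (link_subset hΔ v) (m+1) z
        - coneMap K Δ v m (bdry K (link_down hΔ {v}) m z) := by
  refine map_eq_of_chainOf K ((bdry K hΔ (m+1)).comp (coneMap K Δ v (m+1)))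
    (inclMap K (link_subset hΔ v) (m+1)
      - (coneMap K Δ v m).comp (bdry K (link_down hΔ {v}) m)) (fun u hu hc => ?_) z
  have hv : v ∉ u := (mem_link_singleton.mp hu).1
  simp only [LinearMap.comp_apply, LinearMap.sub_apply]
  rw [coneMap_chainOf K Δ v (m+1) hu, map_smul,
    bdry_chainOf K hΔ (m+1) (mem_link_singleton.mp hu).2
      (by rw [Finset.card_insert_of_notMem hv, hc]),
    Finset.sum_insert hv, Finset.erase_insert hv,
    inclMap_chainOf K (link_subset hΔ v) (m+1) hu,
    bdry_chainOf K (link_down hΔ {v}) m hu hc, map_sum, smul_add, smul_smul,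
    sg_insert_self K hv, sg_mul_self, one_smul, Finset.smul_sum, sub_eq_add_neg,
    ← Finset.sum_neg_distrib]
  congr 1
  refine Finset.sum_congr rfl fun w hw => ?_
  rw [map_smul, coneMap_chainOf K Δ v m (link_down hΔ {v} _ hu _ (Finset.erase_subset _ _)),
    Finset.erase_insert_of_ne (show v ≠ w from fun h => hv (h ▸ hw))]
  rw [smul_smul, smul_smul, ← neg_smul, sgn_key K hv hw]

end Identities

----------------------------------------------------------------
-- vanishing of reduced homology
----------------------------------------------------------------

def Vanishes {Δ : Set (Finset V)} (hΔ : IsDown Δ) (c : ℕ) : Prop :=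
  ∀ z : Chains K Δ c, z ∈ cycles K hΔ c → z ∈ LinearMap.range (bdry K hΔ c)

lemma mem_cycles_succ {Δ : Set (Finset V)} {hΔ : IsDown Δ} {c : ℕ} {z : Chains K Δ (c+1)} :
    z ∈ cycles K hΔ (c+1) ↔ bdry K hΔ c z = 0 := by
  rw [show cycles K hΔ (c+1) = LinearMap.ker (bdry K hΔ c) from rfl, LinearMap.mem_ker]

lemma mem_cycles_zero {Δ : Set (Finset V)} {hΔ : IsDown Δ} (z : Chains K Δ 0) :
    z ∈ cycles K hΔ 0 := by
  rw [show cycles K hΔ 0 = ⊤ from rfl]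
  exact Submodule.mem_top

lemma subsingleton_RH_iff {Δ : Set (Finset V)} (hΔ : IsDown Δ) (c : ℕ) :
    Subsingleton (RH K hΔ c) ↔ Vanishes K hΔ c := by
  refine Iff.trans Submodule.Quotient.subsingleton_iff ?_
  constructor
  · intro h z hz
    have := (Submodule.eq_top_iff'.mp h) ⟨z, hz⟩
    simpa [Submodule.mem_comap] using this
  · intro h
    rw [Submodule.eq_top_iff']
    intro x
    simpa [Submodule.mem_comap] using h x.1 x.2

lemma nontrivial_RH_iff {Δ : Set (Finset V)} (hΔ : IsDown Δ) (c : ℕ) :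
    Nontrivial (RH K hΔ c) ↔ ¬ Vanishes K hΔ c := by
  rw [← not_subsingleton_iff_nontrivial, subsingleton_RH_iff]

lemma vanishes_of_no_face {Δ : Set (Finset V)} (hΔ : IsDown Δ) (c : ℕ)
    (h : ∀ s ∈ Δ, s.card ≠ c) : Vanishes K hΔ c := by
  intro z _
  have hz0 : z = 0 := by
    ext a
    exact (h a.1 a.2.1 a.2.2).elim
  exact hz0 ▸ ⟨0, map_zero _⟩

lemma vanishes_congr {Δ₁ Δ₂ : Set (Finset V)} (h₁ : IsDown Δ₁) (h₂ : IsDown Δ₂)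
    (h : Δ₁ = Δ₂) (c : ℕ) (hv : Vanishes K h₁ c) : Vanishes K h₂ c := by
  subst h
  exact hv

----------------------------------------------------------------
-- Mayer–Vietoris style lemmas
----------------------------------------------------------------

section MV

variable {Δ : Set (Finset V)} (hΔ : IsDown Δ) (v : V)

lemma bdry_decomp (n : ℕ) (w : Chains K Δ (n+1))
    (hc : iotaMap K Δ v n w ∈ cycles K (link_down hΔ {v}) n) :
    bdry K hΔ n w
      = inclMap K (link_subset hΔ v) n (iotaMap K Δ v n w)
        + inclMap K (del_subset Δ v) n
            (bdry K (del_down hΔ v) n (projMap K Δ v (n+1) w)) := by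
  conv_lhs => rw [← cone_iota_add_proj K v n w]
  rw [map_add, incl_bdry K (del_down hΔ v) hΔ (del_subset Δ v) n]
  congr 1
  cases n with
  | zero => exact bdry_cone_zero K hΔ v _
  | succ m =>
    rw [bdry_cone_succ K hΔ v m, (mem_cycles_succ K).mp hc, map_zero, sub_zero]

lemma iota_bdry (m : ℕ) (w : Chains K Δ (m+2)) :
    iotaMap K Δ v m (bdry K hΔ (m+1) w)
      = - bdry K (link_down hΔ {v}) m (iotaMap K Δ v (m+1) w) := by
  conv_lhs => rw [← cone_iota_add_proj K v (m+1) w,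
    map_add (bdry K hΔ (m+1)) _ _]
  rw [bdry_cone_succ K hΔ v m,
    ← incl_bdry K (del_down hΔ v) hΔ (del_subset Δ v) (m+1),
    map_add (iotaMap K Δ v m) _ _, map_sub (iotaMap K Δ v m) _ _,
    iota_incl K v (link_subset hΔ v) (fun s hs => (mem_link_singleton.mp hs).1) m,
    iota_cone K v m,
    iota_incl K v (del_subset Δ v) (fun s hs => hs.2) m]
  abel

lemma iota_mem_cycles (c : ℕ) (z : Chains K Δ (c+1)) (hz : z ∈ cycles K hΔ (c+1)) :
    iotaMap K Δ v c z ∈ cycles K (link_down hΔ {v}) c := by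
  cases c with
  | zero => exact mem_cycles_zero K _
  | succ m =>
    rw [mem_cycles_succ]
    have := iota_bdry K hΔ v m z
    rw [(mem_cycles_succ K).mp hz, map_zero] at this
    exact (neg_eq_zero.mp this.symm)

/-- Lemma A: if the link of `v` vanishes at `c` and the deletion of `v` vanishes at `c+1`,
then `Δ` vanishes at `c+1`. -/
lemma lemA (c : ℕ)
    (h1 : Vanishes K (link_down hΔ {v}) c)
    (h2 : Vanishes K (del_down hΔ v) (c+1)) :
    Vanishes K hΔ (c+1) := by
  intro z hz
  have hιc : iotaMap K Δ v c z ∈ cycles K (link_down hΔ {v}) c :=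
    iota_mem_cycles K hΔ v c z hz
  obtain ⟨y, hy⟩ := h1 _ hιc
  -- the deletion part
  set zt : Chains K (del Δ v) (c+1) :=
    projMap K Δ v (c+1) z + inclMap K (link_subset_del hΔ v) (c+1) y with hzt
  have dz := cone_iota_add_proj K v c z
  have claim0 : inclMap K (del_subset Δ v) (c+1) zt
      = z + bdry K hΔ (c+1) (coneMap K Δ v (c+1) y) := by
    rw [hzt, map_add, incl_incl K (link_subset_del hΔ v) (del_subset Δ v) (c+1),
      bdry_cone_succ K hΔ v c, hy]
    calc inclMap K (del_subset Δ v) (c+1) (projMap K Δ v (c+1) z)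
          + inclMap K (link_subset hΔ v) (c+1) y
        = (coneMap K Δ v c (iotaMap K Δ v c z)
            + inclMap K (del_subset Δ v) (c+1) (projMap K Δ v (c+1) z))
          + (inclMap K (link_subset hΔ v) (c+1) y
            - coneMap K Δ v c (iotaMap K Δ v c z)) := by abel
      _ = z + (inclMap K (link_subset hΔ v) (c+1) y
            - coneMap K Δ v c (iotaMap K Δ v c z)) := by rw [dz]
  have claim1 : zt ∈ cycles K (del_down hΔ v) (c+1) := by
    rw [mem_cycles_succ]
    have key := bdry_decomp K hΔ v c z hιc
    rw [(mem_cycles_succ K).mp hz] at key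
    have key2 : inclMap K (del_subset Δ v) c
        (inclMap K (link_subset_del hΔ v) c (iotaMap K Δ v c z)
          + bdry K (del_down hΔ v) c (projMap K Δ v (c+1) z)) = 0 := by
      rw [map_add, incl_incl K (link_subset_del hΔ v) (del_subset Δ v) c]
      exact key.symm
    have key3 := congrArg (projMap K Δ v c) key2
    rw [proj_incl K v c, map_zero] at key3
    rw [hzt, map_add, ← incl_bdry K (link_down hΔ {v}) (del_down hΔ v) (link_subset_del hΔ v) c,
      hy]
    rw [add_comm] at key3
    exact key3
  obtain ⟨wt, hwt⟩ := h2 _ claim1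
  refine ⟨inclMap K (del_subset Δ v) (c+2) wt - coneMap K Δ v (c+1) y, ?_⟩
  rw [map_sub, ← incl_bdry K (del_down hΔ v) hΔ (del_subset Δ v) (c+1), hwt, claim0]
  abel

/-- Lemma A': if the link of `v` and `Δ` both vanish at `n`, the deletion vanishes at `n`. -/
lemma lemA' (n : ℕ)
    (h1 : Vanishes K (link_down hΔ {v}) n)
    (h2 : Vanishes K hΔ n) :
    Vanishes K (del_down hΔ v) n := by
  intro z hz
  have hjz : inclMap K (del_subset Δ v) n z ∈ cycles K hΔ n := by
    cases n with
    | zero => exact mem_cycles_zero K _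
    | succ m =>
      rw [mem_cycles_succ, ← incl_bdry K (del_down hΔ v) hΔ (del_subset Δ v) m,
        (mem_cycles_succ K).mp hz, map_zero]
  obtain ⟨w, hw⟩ := h2 _ hjz
  have hιc : iotaMap K Δ v n w ∈ cycles K (link_down hΔ {v}) n := by
    cases n with
    | zero => exact mem_cycles_zero K _
    | succ m =>
      rw [mem_cycles_succ]
      have := iota_bdry K hΔ v m w
      rw [hw, iota_incl K v (del_subset Δ v) (fun s hs => hs.2) m] at this
      exact (neg_eq_zero.mp this.symm)
  obtain ⟨u, hu⟩ := h1 _ hιc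
  have key := bdry_decomp K hΔ v n w hιc
  rw [hw] at key
  have key2 : inclMap K (del_subset Δ v) n
      (inclMap K (link_subset_del hΔ v) n (iotaMap K Δ v n w)
        + bdry K (del_down hΔ v) n (projMap K Δ v (n+1) w)) =
      inclMap K (del_subset Δ v) n z := by
    rw [map_add, incl_incl K (link_subset_del hΔ v) (del_subset Δ v) n]
    exact key.symm
  have key3 := congrArg (projMap K Δ v n) key2
  rw [proj_incl K v n, proj_incl K v n] at key3
  refine ⟨inclMap K (link_subset_del hΔ v) (n+1) u + projMap K Δ v (n+1) w, ?_⟩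
  rw [map_add, ← incl_bdry K (link_down hΔ {v}) (del_down hΔ v) (link_subset_del hΔ v) n, hu]
  exact key3

end MV

----------------------------------------------------------------
-- links of links, links of deletions
----------------------------------------------------------------

lemma link_link (Δ : Set (Finset V)) (σ τ : Finset V) (hd : Disjoint τ σ) :
    link (link Δ σ) τ = link Δ (τ ∪ σ) := by
  ext s
  simp only [link, Set.mem_setOf_eq]
  constructor
  · rintro ⟨h1, h2, h3⟩
    refine ⟨Finset.disjoint_union_right.mpr ⟨h1, ?_⟩, by rwa [Finset.union_assoc] at h3⟩
    exact (Finset.disjoint_union_left.mp h2).1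
  · rintro ⟨h1, h2⟩
    obtain ⟨hsτ, hsσ⟩ := Finset.disjoint_union_right.mp h1
    exact ⟨hsτ, Finset.disjoint_union_left.mpr ⟨hsσ, hd⟩, by rwa [Finset.union_assoc]⟩

lemma link_del (Δ : Set (Finset V)) (v : V) (ρ : Finset V) (hv : v ∉ ρ) :
    link (del Δ v) ρ = del (link Δ ρ) v := by
  ext s
  simp only [link, del, Set.mem_setOf_eq, Set.mem_sep_iff]
  constructor
  · rintro ⟨h1, h2, h3⟩
    exact ⟨⟨h1, h2⟩, fun hvs => h3 (Finset.mem_union_left _ hvs)⟩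
  · rintro ⟨⟨h1, h2⟩, h3⟩
    refine ⟨h1, h2, fun hvu => ?_⟩
    rcases Finset.mem_union.mp hvu with h | h
    · exact h3 h
    · exact hv h

----------------------------------------------------------------
-- the main induction
----------------------------------------------------------------

section Main

variable [Fintype V]

def vertexSet (Δ : Set (Finset V)) : Finset V :=
  Finset.univ.filter (fun u => {u} ∈ Δ)

lemma no_vertex_vanishes {Δ : Set (Finset V)} (hΔ : IsDown Δ)
    (h : ∀ v : V, {v} ∉ Δ) (c : ℕ) : Vanishes K hΔ (c+1) :=
  vanishes_of_no_face K hΔ (c+1) (fun s hs hc => by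
    obtain ⟨v, hvs⟩ := Finset.card_pos.mp (show 0 < s.card by omega)
    exact h v (hΔ _ hs _ (Finset.singleton_subset_iff.mpr hvs)))

lemma main_induction (c : ℕ) : ∀ (N : ℕ) (Δ : Set (Finset V)) (hΔ : IsDown Δ),
    (vertexSet Δ).card ≤ N →
    (∀ ρ ∈ Δ, ρ ≠ ∅ → Vanishes K (link_down hΔ ρ) c) →
    Vanishes K hΔ (c+1) := by
  intro N
  induction N with
  | zero =>
    intro Δ hΔ hcard _
    refine no_vertex_vanishes K hΔ (fun v hv => ?_) c
    have : v ∈ vertexSet Δ := Finset.mem_filter.mpr ⟨Finset.mem_univ v, hv⟩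
    have := Finset.card_pos.mpr ⟨v, this⟩
    omega
  | succ N ih =>
    intro Δ hΔ hcard hvan
    by_cases hvert : ∃ v : V, {v} ∈ Δ
    · obtain ⟨v, hv⟩ := hvert
      refine lemA K hΔ v c (hvan {v} hv (Finset.singleton_ne_empty v)) ?_
      have hvmem : v ∈ vertexSet Δ := Finset.mem_filter.mpr ⟨Finset.mem_univ v, hv⟩
      refine ih (del Δ v) (del_down hΔ v) ?_ ?_
      · have hsub : vertexSet (del Δ v) ⊆ (vertexSet Δ).erase v := by
          intro u hu
          obtain ⟨_, hu1, hu2⟩ := Finset.mem_filter.mp hu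
          refine Finset.mem_erase.mpr ⟨?_, Finset.mem_filter.mpr ⟨Finset.mem_univ u, hu1⟩⟩
          rintro rfl
          exact hu2 (Finset.mem_singleton_self u)
        have h1 := Finset.card_le_card hsub
        have h2 := Finset.card_erase_of_mem hvmem
        have h3 := Finset.card_pos.mpr ⟨v, hvmem⟩
        omega
      · rintro ρ ⟨hρΔ, hvρ⟩ hne
        refine vanishes_congr K (del_down (link_down hΔ ρ) v) (link_down (del_down hΔ v) ρ)
          (link_del Δ v ρ hvρ).symm c ?_
        refine lemA' K (link_down hΔ ρ) v c ?_ (hvan ρ hρΔ hne)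
        have hdisj : Disjoint ({v} : Finset V) ρ := by
          simpa [Finset.disjoint_singleton_left] using hvρ
        by_cases hmem : ({v} ∪ ρ) ∈ Δ
        · exact vanishes_congr K (link_down hΔ ({v} ∪ ρ)) _
            (link_link Δ ρ {v} hdisj).symm c
            (hvan ({v} ∪ ρ) hmem (fun hc => by have : v ∈ ({v} ∪ ρ : Finset V) := Finset.mem_union_left _ (Finset.mem_singleton_self v); rw [hc] at this; exact absurd this (Finset.notMem_empty v)))
        · refine vanishes_of_no_face K _ c (fun s hs _ => (hmem ?_).elim)
          rw [link_link Δ ρ {v} hdisj] at hs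
          exact hΔ _ hs.2 _ Finset.subset_union_right
    · push_neg at hvert
      exact no_vertex_vanishes K hΔ hvert c

----------------------------------------------------------------
-- descending links
----------------------------------------------------------------

lemma descent {Δ : Set (Finset V)} (hΔ : IsDown Δ) {σ : Finset V} (hσ : σ ∈ Δ) (c : ℕ)
    (h : Nontrivial (RH K (link_down hΔ σ) (c+1))) :
    ∃ τ ∈ Δ, σ ⊂ τ ∧ Nontrivial (RH K (link_down hΔ τ) c) := by
  by_contra hcon
  push_neg at hcon
  rw [nontrivial_RH_iff] at h
  apply h
  refine main_induction K c (vertexSet (link Δ σ)).card (link Δ σ) (link_down hΔ σ) le_rfl ?_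
  intro ρ hρ hne
  have hτ : ρ ∪ σ ∈ Δ := hρ.2
  have hss : σ ⊂ ρ ∪ σ := by
    obtain ⟨x, hx⟩ := Finset.nonempty_iff_ne_empty.mpr hne
    refine Finset.ssubset_iff_of_subset Finset.subset_union_right |>.mpr
      ⟨x, Finset.mem_union_left _ hx, ?_⟩
    exact Finset.disjoint_left.mp hρ.1 hx
  have hnt := hcon (ρ ∪ σ) hτ hss
  rw [subsingleton_RH_iff] at hnt
  exact vanishes_congr K (link_down hΔ (ρ ∪ σ)) (link_down (link_down hΔ σ) ρ)
    (link_link Δ σ ρ hρ.1).symm c hnt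

lemma descent_iter {Δ : Set (Finset V)} (hΔ : IsDown Δ) (c : ℕ) :
    ∀ (k : ℕ) (σ : Finset V), σ ∈ Δ → Nontrivial (RH K (link_down hΔ σ) (c+k)) →
    ∃ τ ∈ Δ, σ ⊆ τ ∧ σ.card + k ≤ τ.card ∧ Nontrivial (RH K (link_down hΔ τ) c) := by
  intro k
  induction k with
  | zero => exact fun σ hσ h => ⟨σ, hσ, subset_rfl, by omega, h⟩
  | succ k ih =>
    intro σ hσ h
    obtain ⟨τ₁, hτ₁, hss, hnt⟩ := descent K hΔ hσ (c+k) h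
    obtain ⟨τ, hτ, hsub, hcard, hnt'⟩ := ih τ₁ hτ₁ hnt
    have := Finset.card_lt_card hss
    exact ⟨τ, hτ, hss.subset.trans hsub, by omega, hnt'⟩

lemma pr_le_case {Δ : Set (Finset V)} {hΔ : IsDown Δ} (hPR : IsPR K hΔ)
    {σ : Finset V} (hσ : σ ∈ Δ) (c k : ℕ)
    (h₁ : Nontrivial (RH K (link_down hΔ σ) c))
    (h₂ : Nontrivial (RH K (link_down hΔ σ) (c+k))) : k = 0 := by
  by_contra hk
  obtain ⟨τ, hτ, _, hcard, hnt⟩ := descent_iter K hΔ c k σ hσ h₂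
  have := hPR σ hσ τ hτ c h₁ hnt
  omega

end Main

end Aux

end SRPure

open SRPure in
/-- In a PR complex over `K`, every link has at most one nontrivial
reduced homology group. -/
theorem link_homology_unique_of_isPR
    {V : Type*} [LinearOrder V] [Fintype V] (K : Type*) [Field K]
    (Δ : Set (Finset V)) (hΔ : IsDown Δ) (hPR : IsPR K hΔ) :
    ∀ σ ∈ Δ, ∀ c₁ c₂ : ℕ,
      Nontrivial (RH K (link_down hΔ σ) c₁) →
      Nontrivial (RH K (link_down hΔ σ) c₂) → c₁ = c₂ := by
  intro σ hσ c₁ c₂ h₁ h₂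
  rcases le_total c₁ c₂ with h | h
  · obtain ⟨k, rfl⟩ := Nat.exists_eq_add_of_le h
    have := pr_le_case K hPR hσ c₁ k h₁ h₂
    omega
  · obtain ⟨k, rfl⟩ := Nat.exists_eq_add_of_le h
    have := pr_le_case K hPR hσ c₂ k h₂ h₁
    omega
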